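/- Assume μ1 < μ2 and ρ = ρ̂2. Then √(2(1−ρ̂2)/(μ1² + μ2² − 2ρ̂2·μ1·μ2)) = 1/μ2, the infimum of g over (0,∞)² equals 4μ2 and is attained at (1/μ2, 1/μ2), and s = 1/μ2 is the unique minimizer of the function g2(s) = (1+μ2·s)²/s on (0,∞), with g2(1/μ2) = 4μ2. -/

import Mathlib

open Matrix

/-- Covariance matrix `Σ_{ts}` of `(X₁(t), X₂(s))` for a correlated Brownian motion with
correlation `ρ`. -/
noncomputable def covM (ρ t s : ℝ) : Matrix (Fin 2) (Fin 2) ℝ :=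
  !![t, ρ * min t s; ρ * min t s, s]

/-- `g(t,s) = inf { (x,y) Σ_{ts}⁻¹ (x,y)ᵀ : x ≥ 1 + μ₁ t, y ≥ 1 + μ₂ s }`. -/
noncomputable def gfun (ρ μ1 μ2 t s : ℝ) : ℝ :=
  sInf {v : ℝ | ∃ x y : ℝ, 1 + μ1 * t ≤ x ∧ 1 + μ2 * s ≤ y ∧
    v = ![x, y] ⬝ᵥ ((covM ρ t s)⁻¹ *ᵥ ![x, y])}

lemma quadform (ρ t s x y : ℝ) :
    ![x, y] ⬝ᵥ ((covM ρ t s)⁻¹ *ᵥ ![x, y]) =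
      (t * s - (ρ * min t s) ^ 2)⁻¹ * (s * x ^ 2 - 2 * (ρ * min t s) * x * y + t * y ^ 2) := by
  rw [covM, Matrix.inv_def, Matrix.adjugate_fin_two_of, Matrix.det_fin_two_of,
    Ring.inverse_eq_inv']
  simp [Matrix.mulVec, dotProduct, Fin.sum_univ_two]
  ring

/-- If `μ₁ < μ₂` and `ρ = ρ̂₂`, then `√(2(1-ρ̂₂)/(μ₁² + μ₂² - 2ρ̂₂μ₁μ₂)) = 1/μ₂`, the
infimum of `g` over `(0,∞)²` equals `4μ₂` and is attained at `(1/μ₂, 1/μ₂)`, and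
`s = 1/μ₂` is the unique minimizer of `g₂(s) = (1+μ₂s)²/s` on `(0,∞)`, with
`g₂(1/μ₂) = 4μ₂`. -/
theorem statement14 (ρ μ1 μ2 : ℝ) (hρ : ρ = (μ1 + μ2) / (2 * μ2))
    (hμ1 : 0 < μ1) (hμ12 : μ1 < μ2) :
    Real.sqrt (2 * (1 - ρ) / (μ1 ^ 2 + μ2 ^ 2 - 2 * ρ * μ1 * μ2)) = 1 / μ2 ∧
      IsLeast {v : ℝ | ∃ t s : ℝ, 0 < t ∧ 0 < s ∧ v = gfun ρ μ1 μ2 t s} (4 * μ2) ∧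
      gfun ρ μ1 μ2 (1 / μ2) (1 / μ2) = 4 * μ2 ∧
      (1 + μ2 * (1 / μ2)) ^ 2 / (1 / μ2) = 4 * μ2 ∧
      (∀ s : ℝ, 0 < s → 4 * μ2 ≤ (1 + μ2 * s) ^ 2 / s) ∧
      ∀ s : ℝ, 0 < s → (1 + μ2 * s) ^ 2 / s = 4 * μ2 → s = 1 / μ2 := by
  have hμ2 : 0 < μ2 := hμ1.trans hμ12
  have hρ0 : 0 < ρ := by rw [hρ]; positivity
  have hρ1 : ρ < 1 := by rw [hρ, div_lt_one (by positivity)]; linarith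
  have hρsq : ρ ^ 2 < 1 := by nlinarith
  -- g2 lower bound
  have g2_lb : ∀ s : ℝ, 0 < s → 4 * μ2 ≤ (1 + μ2 * s) ^ 2 / s := by
    intro s hs
    rw [le_div_iff₀ hs]
    nlinarith [sq_nonneg (1 - μ2 * s)]
  -- key quadratic form lower bound
  have key : ∀ t s x y : ℝ, 0 < t → 0 < s → 1 + μ2 * s ≤ y →
      4 * μ2 ≤ (t * s - (ρ * min t s) ^ 2)⁻¹ *
        (s * x ^ 2 - 2 * (ρ * min t s) * x * y + t * y ^ 2) := by
    intro t s x y ht hs hy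
    set m := min t s with hm
    have hm0 : 0 < m := lt_min ht hs
    have hmt : m ≤ t := min_le_left _ _
    have hms : m ≤ s := min_le_right _ _
    have hts : m * m ≤ t * s := mul_le_mul hmt hms hm0.le ht.le
    have hD : 0 < t * s - (ρ * m) ^ 2 := by
      nlinarith [sq_nonneg ρ, mul_pos ht hs]
    have hy0 : (0:ℝ) < 1 + μ2 * s := by positivity
    have h1 : 4 * μ2 ≤ y ^ 2 / s := by
      refine (g2_lb s hs).trans ?_
      gcongr
    have expand : (t * s - (ρ * m) ^ 2)⁻¹ * (s * x ^ 2 - 2 * (ρ * m) * x * y + t * y ^ 2)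
        - y ^ 2 / s = (s * x - ρ * m * y) ^ 2 / (s * (t * s - (ρ * m) ^ 2)) := by
      rw [sub_eq_iff_eq_add, div_add_div _ _ (mul_pos hs hD).ne' hs.ne', inv_mul_eq_div,
        div_eq_div_iff hD.ne' (mul_pos (mul_pos hs hD) hs).ne']
      ring
    have h2 : (0:ℝ) ≤ (s * x - ρ * m * y) ^ 2 / (s * (t * s - (ρ * m) ^ 2)) := by positivity
    linarith
  -- lower bound on gfun
  have glb : ∀ t s : ℝ, 0 < t → 0 < s → 4 * μ2 ≤ gfun ρ μ1 μ2 t s := by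
    intro t s ht hs
    rw [gfun]
    refine le_csInf ⟨_, 1 + μ1 * t, 1 + μ2 * s, le_refl _, le_refl _, rfl⟩ ?_
    rintro v ⟨x, y, hx, hy, rfl⟩
    rw [quadform]
    exact key t s x y ht hs hy
  have hinvμ2 : (0:ℝ) < 1 / μ2 := by positivity
  -- value at (1/μ2, 1/μ2)
  have gval : gfun ρ μ1 μ2 (1 / μ2) (1 / μ2) = 4 * μ2 := by
    rw [gfun]
    refine le_antisymm (csInf_le ⟨4 * μ2, ?_⟩ ⟨(μ1 + μ2) / μ2, 2, ?_, ?_, ?_⟩)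
      (by rw [← gfun]; exact glb _ _ hinvμ2 hinvμ2)
    · rintro v ⟨x, y, hx, hy, rfl⟩
      rw [quadform]
      exact key _ _ x y hinvμ2 hinvμ2 hy
    · refine le_of_eq ?_
      field_simp
      ring
    · rw [mul_one_div, div_self hμ2.ne']
      norm_num
    · rw [quadform, min_self]
      have hd : (0:ℝ) < 1 / μ2 * (1 / μ2) - (ρ * (1 / μ2)) ^ 2 := by
        nlinarith [mul_pos hinvμ2 hinvμ2, hρsq, sq_nonneg ρ]
      rw [inv_mul_eq_div, eq_div_iff hd.ne', hρ]
      field_simp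
      ring
  refine ⟨?_, ⟨⟨1 / μ2, 1 / μ2, hinvμ2, hinvμ2, gval.symm⟩, ?_⟩, gval, ?_, g2_lb, ?_⟩
  · have hd : μ1 ^ 2 + μ2 ^ 2 - 2 * ρ * μ1 * μ2 = μ2 * (μ2 - μ1) := by
      rw [hρ]; field_simp; ring
    have hsub : (0:ℝ) < μ2 - μ1 := by linarith
    have harg : 2 * (1 - ρ) / (μ1 ^ 2 + μ2 ^ 2 - 2 * ρ * μ1 * μ2) = (1 / μ2) ^ 2 := by
      rw [hd, hρ]
      field_simp
      ring
    rw [harg, Real.sqrt_sq hinvμ2.le]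
  · rintro v ⟨t, s, ht, hs, rfl⟩
    exact glb t s ht hs
  · rw [mul_one_div, div_self hμ2.ne', one_div, division_def, inv_inv]
    norm_num
  · intro s hs h
    rw [div_eq_iff hs.ne'] at h
    have h2 : (1 - μ2 * s) ^ 2 = 0 := by nlinarith
    have h3 : 1 - μ2 * s = 0 := by
      exact pow_eq_zero_iff (by norm_num) |>.mp h2
    rw [eq_div_iff hμ2.ne']
    linarith
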